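/- arXiv:1903.00051 — 3 statements merged into one kernel-verified Lean document; each statement's English description precedes it below -/
import Mathlib

section
/- For every idempotent semicharacter ρ₀ ∈ E(Ŝ), the maximal subgroup of the compact semigroup Ŝ containing ρ₀ equals the coset ρ₀X. Precisely: ρ₀X is a group under pointwise multiplication with identity ρ₀, and if ψ ∈ Ŝ satisfies ρ₀ψ = ψ and there exists ψ' ∈ Ŝ with ρ₀ψ' = ψ' and ψψ' = ρ₀, then |ψ| = ρ₀ and ψ ∈ ρ₀X. -/
open Complex Topology Set

/-- The compact semigroup `Ŝ` of semicharacters of a discrete abelian monoid `S`: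
nonzero homomorphisms into the multiplicative semigroup of the closed unit disc,
realized as the set of functions `ψ : S → ℂ` with `ψ 1 = 1`, multiplicative, and
of modulus at most one, endowed with the topology of pointwise convergence. -/
def Shat (S : Type*) [CommMonoid S] : Set (S → ℂ) :=
  {ψ | ψ 1 = 1 ∧ (∀ s t, ψ (s * t) = ψ s * ψ t) ∧ ∀ s, ‖ψ s‖ ≤ 1}

/-- The group `X` of characters of `S`: semicharacters of modulus one. -/
def charGroup (S : Type*) [CommMonoid S] : Set (S → ℂ) :=
  {ψ | ψ ∈ Shat S ∧ ∀ s, ‖ψ s‖ = 1}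

/-- `Ŝ₊`: the set of nonnegative semicharacters of `S`. -/
def ShatPos (S : Type*) [CommMonoid S] : Set (S → ℂ) :=
  {ψ | ψ ∈ Shat S ∧ ∀ s, (ψ s).im = 0 ∧ 0 ≤ (ψ s).re}

/-- `E(Ŝ)`: the set of idempotent semicharacters (taking only the values `0` and `1`). -/
def idemSC (S : Type*) [CommMonoid S] : Set (S → ℂ) :=
  {ψ | ψ ∈ Shat S ∧ ∀ s, ψ s = 0 ∨ ψ s = 1}

/-- The modulus `|ψ|` of a semicharacter. -/
noncomputable def scMod {S : Type*} (ψ : S → ℂ) : S → ℂ :=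
  fun s => ((‖ψ s‖ : ℝ) : ℂ)

/-- The power `ρ^z` of a nonnegative semicharacter `ρ` (with `0^z := 0`). -/
noncomputable def scPow {S : Type*} (ρ : S → ℂ) (z : ℂ) : S → ℂ :=
  fun s => if ρ s = 0 then 0 else ρ s ^ z

/-- A function `F` on `Ŝ` is generalized analytic on `Ŝ ∖ X` if for all
`ρ ∈ Ŝ₊ ∖ X` and `ψ ∈ Ŝ ∖ X` the map `z ↦ F (ρ^z ψ)` is analytic on the open
right half-plane and continuous at `0` along `(0, ∞)`. -/
def GenAnalytic (S : Type*) [CommMonoid S] (F : (S → ℂ) → ℂ) : Prop :=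
  ∀ ρ ∈ ShatPos S \ charGroup S, ∀ ψ ∈ Shat S \ charGroup S,
    DifferentiableOn ℂ (fun z : ℂ => F (scPow ρ z * ψ)) {z : ℂ | 0 < z.re} ∧
    ContinuousWithinAt (fun t : ℝ => F (scPow ρ (t : ℂ) * ψ)) (Set.Ioi (0 : ℝ)) 0

/-- Membership in the uniform algebra `A(Ŝ)`: continuous on `Ŝ` and generalized
analytic on `Ŝ ∖ X`. -/
def MemA (S : Type*) [CommMonoid S] (F : (S → ℂ) → ℂ) : Prop :=
  ContinuousOn F (Shat S) ∧ GenAnalytic S F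

/-- Peak sets of the algebra `A(Ŝ)`. -/
def IsPeakSetA (S : Type*) [CommMonoid S] (P : Set (S → ℂ)) : Prop :=
  P ⊆ Shat S ∧ IsClosed P ∧
    ∃ f, MemA S f ∧ (∀ ψ ∈ P, f ψ = 1) ∧ ∀ ψ ∈ Shat S \ P, ‖f ψ‖ < 1

/-- `p`-points of the algebra `A(Ŝ)`: points of `Ŝ` that are intersections of peak sets. -/
def IsPPointA (S : Type*) [CommMonoid S] (p : S → ℂ) : Prop :=
  p ∈ Shat S ∧
    ∃ Ps : Set (Set (S → ℂ)), (∀ P ∈ Ps, IsPeakSetA S P) ∧ ⋂₀ Ps = {p}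

/-- The strong boundary `Γ` of `A(Ŝ)`: the set of all `p`-points. -/
def strongBoundary (S : Type*) [CommMonoid S] : Set (S → ℂ) :=
  {ψ | IsPPointA S ψ}

/-- The coset `ρX` of the character group. -/
def cosetX (S : Type*) [CommMonoid S] (ρ : S → ℂ) : Set (S → ℂ) :=
  {φ | ∃ χ ∈ charGroup S, φ = ρ * χ}

/-- `E₀(Ŝ)`: idempotents `ρ₀` admitting `ρ₁ ∈ Ŝ₊` with `ρ₁ = 1` on `S(ρ₀)` and
`0 < ρ₁ < 1` off `S(ρ₀)`. -/
def E0 (S : Type*) [CommMonoid S] : Set (S → ℂ) :=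
  {ρ₀ | ρ₀ ∈ idemSC S ∧ ∃ ρ₁ ∈ ShatPos S,
    (∀ s, ρ₀ s ≠ 0 → ρ₁ s = 1) ∧ ∀ s, ρ₀ s = 0 → 0 < (ρ₁ s).re ∧ (ρ₁ s).re < 1}

/-- `θ`: the indicator function of `{e}`. -/
noncomputable def theta (S : Type*) [CommMonoid S] : S → ℂ :=
  ({1} : Set S).indicator 1

/-- A closed boundary of `A(Ŝ)`: a closed subset of `Ŝ` on which every function of
`A(Ŝ)` attains its maximum modulus over `Ŝ`. -/
def IsClosedBoundaryA (S : Type*) [CommMonoid S] (B : Set (S → ℂ)) : Prop :=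
  B ⊆ Shat S ∧ IsClosed B ∧
    ∀ f, MemA S f → ∃ ψ ∈ B, ∀ φ ∈ Shat S, ‖f φ‖ ≤ ‖f ψ‖

/-- The Shilov boundary of `A(Ŝ)`: the smallest closed boundary. -/
def shilovA (S : Type*) [CommMonoid S] : Set (S → ℂ) :=
  ⋂₀ {B | IsClosedBoundaryA S B}

/-- An ideal of the semigroup `S`: a nonempty proper subset stable under multiplication
by `S`. -/
def IsIdealS (S : Type*) [CommMonoid S] (I : Set S) : Prop :=
  I.Nonempty ∧ I ≠ Set.univ ∧ ∀ s : S, ∀ a ∈ I, s * a ∈ I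

/-- A simple ideal: an ideal whose complement is a subsemigroup. -/
def IsSimpleIdealS (S : Type*) [CommMonoid S] (I : Set S) : Prop :=
  IsIdealS S I ∧ ∀ a b : S, a ∉ I → b ∉ I → a * b ∉ I

section AuxForStmt5

universe u

noncomputable instance : DivisibleBy (Additive Circle) ℤ where
  div a n := Additive.ofMul (Circle.exp (Complex.arg ((Additive.toMul a : Circle) : ℂ) / (n : ℝ)))
  div_zero a := by
    simp only [Int.cast_zero, div_zero, Circle.exp_zero]
    rfl
  div_cancel a hn := by
    have hexp : ∀ (m : ℤ) (t : ℝ), m • Additive.ofMul (Circle.exp t)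
        = Additive.ofMul (Circle.exp (m * t)) := by
      intro m t
      have := map_zsmul Circle.expHom m t
      simpa [Circle.expHom, zsmul_eq_mul] using this.symm
    rw [hexp]
    rw [mul_div_cancel₀ _ (by exact_mod_cast hn)]
    rw [Circle.exp_arg]
    rfl

theorem exists_circle_extension {G : Type u} [CommGroup G] (H : Subgroup G) (f : H →* Circle) :
    ∃ F : G →* Circle, ∀ h : H, F (h : G) = f h := by
  classical
  let J := AddCommGrpCat.of (ULift.{u} (Additive Circle))
  haveI : CategoryTheory.Injective J := AddCommGrpCat.injective_of_divisible _
  let i : AddCommGrpCat.of (Additive H) ⟶ AddCommGrpCat.of (Additive G) :=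
    AddCommGrpCat.ofHom (MonoidHom.toAdditive H.subtype)
  haveI : CategoryTheory.Mono i := by
    rw [AddCommGrpCat.mono_iff_injective]
    intro a b hab
    exact Subtype.ext hab
  let g : AddCommGrpCat.of (Additive H) ⟶ J :=
    AddCommGrpCat.ofHom
      ((AddEquiv.ulift.symm : Additive Circle ≃+ ULift (Additive Circle)).toAddMonoidHom.comp
        (MonoidHom.toAdditive f))
  let F' := CategoryTheory.Injective.factorThru g i
  have hspec : ∀ x : Additive H, F' (i x) = g x := fun x =>
    CategoryTheory.ConcreteCategory.congr_hom (CategoryTheory.Injective.comp_factorThru g i) x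
  refine ⟨MonoidHom.mk' (fun x => Additive.toMul (AddEquiv.ulift (F' (Additive.ofMul x)))) ?_, ?_⟩
  · intro a b
    have h2 : F' (Additive.ofMul (a * b)) = F' (Additive.ofMul a) + F' (Additive.ofMul b) := by
      exact map_add (CategoryTheory.ConcreteCategory.hom F') (Additive.ofMul a) (Additive.ofMul b)
    dsimp only
    rw [h2, map_add]; rfl
  · intro h
    have h2 : F' (Additive.ofMul (h : G)) = g (Additive.ofMul h) := hspec (Additive.ofMul h)
    simp only [MonoidHom.mk'_apply]
    rw [h2]
    rfl

/-- The canonical map from a comm monoid to the units of its total localization. -/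
def grpIota (S : Type*) [CommMonoid S] : S →* (Localization (⊤ : Submonoid S))ˣ where
  toFun s :=
    { val := Localization.mk s 1
      inv := Localization.mk 1 ⟨s, Submonoid.mem_top s⟩
      val_inv := by
        rw [Localization.mk_mul, mul_one, one_mul]
        exact Localization.mk_self (⟨s, Submonoid.mem_top s⟩ : (⊤ : Submonoid S))
      inv_val := by
        rw [Localization.mk_mul, one_mul, mul_one]
        exact Localization.mk_self (⟨s, Submonoid.mem_top s⟩ : (⊤ : Submonoid S)) }
  map_one' := Units.ext (by simpa using Localization.mk_one)
  map_mul' a b := Units.ext (by simp [Localization.mk_mul])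

theorem grpIota_inj {S : Type*} [CommMonoid S] [IsCancelMul S] {a b : S}
    (h : grpIota S a = grpIota S b) : a = b := by
  have h2 : Localization.mk a (1 : (⊤ : Submonoid S)) = Localization.mk b 1 :=
    congrArg Units.val h
  rw [Localization.mk_eq_mk_iff, Localization.r_iff_exists] at h2
  obtain ⟨c, hc⟩ := h2
  simp only [Submonoid.coe_one, one_mul] at hc
  exact mul_left_cancel hc

/-- Build a point of the circle from a complex number of modulus one. -/
noncomputable def circleMk (z : ℂ) (hz : ‖z‖ = 1) : Circle :=
  ⟨z, by
    simp only [Submonoid.unitSphere, Submonoid.mem_mk, Subsemigroup.mem_mk,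
      mem_sphere_zero_iff_norm, hz]⟩

@[simp] lemma circleMk_coe (z : ℂ) (hz : ‖z‖ = 1) : (circleMk z hz : ℂ) = z := rfl

end AuxForStmt5


/-- For every idempotent semicharacter `ρ₀`, the maximal subgroup of `Ŝ`
containing `ρ₀` equals `ρ₀X`: the coset `ρ₀X` is a group under pointwise multiplication
with identity `ρ₀`, and any `ψ ∈ Ŝ` with `ρ₀ψ = ψ` admitting `ψ' ∈ Ŝ` with `ρ₀ψ' = ψ'`
and `ψψ' = ρ₀` satisfies `|ψ| = ρ₀` and `ψ ∈ ρ₀X`. -/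
theorem stmt5 {S : Type*} [CommMonoid S] [IsCancelMul S]
    (ρ₀ : S → ℂ) (h : ρ₀ ∈ idemSC S) :
    ρ₀ ∈ cosetX S ρ₀ ∧
    (∀ φ₁ ∈ cosetX S ρ₀, ∀ φ₂ ∈ cosetX S ρ₀, φ₁ * φ₂ ∈ cosetX S ρ₀) ∧
    (∀ φ ∈ cosetX S ρ₀, ρ₀ * φ = φ) ∧
    (∀ φ ∈ cosetX S ρ₀, ∃ φ' ∈ cosetX S ρ₀, φ * φ' = ρ₀) ∧
    (∀ ψ ∈ Shat S, ρ₀ * ψ = ψ →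
      (∃ ψ' ∈ Shat S, ρ₀ * ψ' = ψ' ∧ ψ * ψ' = ρ₀) →
        scMod ψ = ρ₀ ∧ ψ ∈ cosetX S ρ₀) := by
  obtain ⟨⟨hρ1, hρmul, hρle⟩, h01⟩ := h
  have hidem : ∀ s, ρ₀ s * ρ₀ s = ρ₀ s := by
    intro s
    rcases h01 s with h0 | h1
    · rw [h0, mul_zero]
    · rw [h1, mul_one]
  have honeX : (1 : S → ℂ) ∈ charGroup S := by
    refine ⟨⟨rfl, fun s t => ?_, fun s => ?_⟩, fun s => ?_⟩ <;> simp
  have hXmul : ∀ χ₁ ∈ charGroup S, ∀ χ₂ ∈ charGroup S, χ₁ * χ₂ ∈ charGroup S := by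
    rintro χ₁ ⟨⟨e1, m1, l1⟩, a1⟩ χ₂ ⟨⟨e2, m2, l2⟩, a2⟩
    refine ⟨⟨?_, fun s t => ?_, fun s => ?_⟩, fun s => ?_⟩
    · simp only [Pi.mul_apply, e1, e2, mul_one]
    · simp only [Pi.mul_apply, m1, m2]; ring
    · simp only [Pi.mul_apply, norm_mul, a1, a2, mul_one, le_refl]
    · simp only [Pi.mul_apply, norm_mul, a1, a2, mul_one]
  refine ⟨⟨1, honeX, (mul_one ρ₀).symm⟩, ?_, ?_, ?_, ?_⟩
  · rintro φ₁ ⟨χ₁, hχ₁, rfl⟩ φ₂ ⟨χ₂, hχ₂, rfl⟩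
    refine ⟨χ₁ * χ₂, hXmul χ₁ hχ₁ χ₂ hχ₂, ?_⟩
    funext s
    simp only [Pi.mul_apply]
    linear_combination (χ₁ s * χ₂ s) * hidem s
  · rintro φ ⟨χ, hχ, rfl⟩
    funext s
    simp only [Pi.mul_apply]
    linear_combination (χ s) * hidem s
  · rintro φ ⟨χ, hχ, rfl⟩
    obtain ⟨⟨e1, m1, l1⟩, a1⟩ := hχ
    have hzz : ∀ s, χ s * (starRingEnd ℂ) (χ s) = 1 := by
      intro s
      rw [Complex.mul_conj, Complex.normSq_eq_norm_sq, a1 s]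
      norm_num
    refine ⟨ρ₀ * fun s => (starRingEnd ℂ) (χ s), ⟨fun s => (starRingEnd ℂ) (χ s), ?_, rfl⟩, ?_⟩
    · refine ⟨⟨?_, fun s t => ?_, fun s => ?_⟩, fun s => ?_⟩
      · show (starRingEnd ℂ) (χ 1) = 1
        rw [e1, map_one]
      · show (starRingEnd ℂ) (χ (s * t)) = (starRingEnd ℂ) (χ s) * (starRingEnd ℂ) (χ t)
        rw [m1, map_mul]
      · show ‖(starRingEnd ℂ) (χ s)‖ ≤ 1
        rw [Complex.norm_conj, a1]
      · show ‖(starRingEnd ℂ) (χ s)‖ = 1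
        rw [Complex.norm_conj, a1]
    · funext s
      simp only [Pi.mul_apply]
      linear_combination (χ s * (starRingEnd ℂ) (χ s)) * hidem s + ρ₀ s * hzz s
  -- part 5
  rintro ψ ⟨hψ1, hψmul, hψle⟩ hfix ⟨ψ', ⟨hψ'1, hψ'mul, hψ'le⟩, _hfix', hprod⟩
  have hpt : ∀ s, ρ₀ s * ψ s = ψ s := fun s => congrFun hfix s
  have hpp : ∀ s, ψ s * ψ' s = ρ₀ s := fun s => congrFun hprod s
  have habs : ∀ s, ρ₀ s = 1 → ‖ψ s‖ = 1 := by
    intro s hs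
    have h1 : ‖ψ s‖ * ‖ψ' s‖ = 1 := by
      rw [← norm_mul, hpp s, hs, norm_one]
    have h2 := hψle s
    have h3 := hψ'le s
    have h4 : (0:ℝ) ≤ ‖ψ s‖ := norm_nonneg _
    have h5 : (0:ℝ) ≤ ‖ψ' s‖ := norm_nonneg _
    nlinarith
  have hzero : ∀ s, ρ₀ s = 0 → ψ s = 0 := fun s hs => by rw [← hpt s, hs, zero_mul]
  have hmod : scMod ψ = ρ₀ := by
    funext s
    rcases h01 s with h0 | h1
    · rw [h0]; unfold scMod; rw [hzero s h0]; simp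
    · rw [h1]; unfold scMod; rw [habs s h1]; simp
  refine ⟨hmod, ?_⟩
  have hψne : ∀ s, ρ₀ s = 1 → ψ s ≠ 0 := by
    intro s hs hcon
    have := habs s hs
    rw [hcon] at this
    simp at this
  have hconj : ∀ b, ρ₀ b = 1 → ψ b * (starRingEnd ℂ) (ψ b) = 1 := by
    intro b hb
    rw [Complex.mul_conj, Complex.normSq_eq_norm_sq, habs b hb]
    norm_num
  have hdiv : ∀ a b c d : S, grpIota S a / grpIota S b = grpIota S c / grpIota S d →
      a * d = c * b := by
    intro a b c d hd
    rw [div_eq_div_iff_mul_eq_mul, ← map_mul, ← map_mul] at hd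
    exact grpIota_inj hd
  have hwd : ∀ a b c d : S, ρ₀ a = 1 → ρ₀ b = 1 → ρ₀ c = 1 → ρ₀ d = 1 →
      grpIota S a / grpIota S b = grpIota S c / grpIota S d →
      ψ a * (starRingEnd ℂ) (ψ b) = ψ c * (starRingEnd ℂ) (ψ d) := by
    intro a b c d ha hb hc hd heq
    have key : ψ a * ψ d = ψ c * ψ b := by
      have := hdiv a b c d heq
      have h2 : ψ (a * d) = ψ (c * b) := by rw [this]
      rwa [hψmul, hψmul] at h2
    have hcancel : (ψ a * (starRingEnd ℂ) (ψ b)) * (ψ b * ψ d)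
        = (ψ c * (starRingEnd ℂ) (ψ d)) * (ψ b * ψ d) := by
      linear_combination (ψ a * ψ d) * hconj b hb - (ψ c * ψ b) * hconj d hd + key
    exact mul_right_cancel₀ (mul_ne_zero (hψne b hb) (hψne d hd)) hcancel
  let H : Subgroup (Localization (⊤ : Submonoid S))ˣ :=
  { carrier := {x | ∃ a, ρ₀ a = 1 ∧ ∃ b, ρ₀ b = 1 ∧ x = grpIota S a / grpIota S b}
    one_mem' := ⟨1, hρ1, 1, hρ1, (div_self' _).symm⟩
    mul_mem' := by
      rintro x y ⟨a, ha, b, hb, rfl⟩ ⟨c, hc, d, hd, rfl⟩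
      refine ⟨a * c, ?_, b * d, ?_, ?_⟩
      · rw [hρmul, ha, hc, one_mul]
      · rw [hρmul, hb, hd, one_mul]
      · rw [map_mul, map_mul, div_mul_div_comm]
    inv_mem' := by
      rintro x ⟨a, ha, b, hb, rfl⟩
      exact ⟨b, hb, a, ha, inv_div _ _⟩ }
  have hex2 : ∀ x : H, ∃ z : Circle, ∀ a b : S, ρ₀ a = 1 → ρ₀ b = 1 →
      (x : (Localization (⊤ : Submonoid S))ˣ) = grpIota S a / grpIota S b →
      (z : ℂ) = ψ a * (starRingEnd ℂ) (ψ b) := by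
    rintro ⟨x, a, ha, b, hb, rfl⟩
    refine ⟨circleMk (ψ a * (starRingEnd ℂ) (ψ b)) ?_, ?_⟩
    · rw [norm_mul, Complex.norm_conj, habs a ha, habs b hb, one_mul]
    · intro c d hc hd hcd
      rw [circleMk_coe]
      exact hwd a b c d ha hb hc hd hcd
  choose f₀ hf₀ using hex2
  have hmulf : ∀ x y : H, f₀ (x * y) = f₀ x * f₀ y := by
    intro x y
    obtain ⟨a, ha, b, hb, hx⟩ := x.2
    obtain ⟨c, hc, d, hd, hy⟩ := y.2
    have habcd : ((x * y : H) : (Localization (⊤ : Submonoid S))ˣ)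
        = grpIota S (a * c) / grpIota S (b * d) := by
      push_cast [hx, hy]
      rw [map_mul, map_mul, div_mul_div_comm]
    have hac : ρ₀ (a * c) = 1 := by rw [hρmul, ha, hc, one_mul]
    have hbd : ρ₀ (b * d) = 1 := by rw [hρmul, hb, hd, one_mul]
    have h1 := hf₀ (x * y) (a * c) (b * d) hac hbd habcd
    have h2 := hf₀ x a b ha hb hx
    have h3 := hf₀ y c d hc hd hy
    apply Subtype.ext
    rw [Circle.coe_mul, h1, h2, h3, hψmul, hψmul, map_mul]
    ring
  obtain ⟨F, hF⟩ := exists_circle_extension H (MonoidHom.mk' f₀ hmulf)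
  refine ⟨fun s => ((F (grpIota S s) : Circle) : ℂ), ⟨⟨?_, fun s t => ?_, fun s => ?_⟩, fun s => ?_⟩, ?_⟩
  · show ((F (grpIota S 1) : Circle) : ℂ) = 1
    rw [map_one, map_one, Circle.coe_one]
  · show ((F (grpIota S (s * t)) : Circle) : ℂ)
      = ((F (grpIota S s) : Circle) : ℂ) * ((F (grpIota S t) : Circle) : ℂ)
    rw [map_mul, map_mul, Circle.coe_mul]
  · show ‖((F (grpIota S s) : Circle) : ℂ)‖ ≤ 1
    rw [Circle.norm_coe]
  · show ‖((F (grpIota S s) : Circle) : ℂ)‖ = 1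
    rw [Circle.norm_coe]
  · funext s
    rcases h01 s with h0 | h1
    · rw [Pi.mul_apply, h0, zero_mul, hzero s h0]
    · have hmem : grpIota S s ∈ H :=
        ⟨s, h1, 1, hρ1, by rw [map_one, div_one]⟩
      have hval := hF ⟨grpIota S s, hmem⟩
      have hspec := hf₀ ⟨grpIota S s, hmem⟩ s 1 h1 hρ1 (by rw [map_one, div_one])
      rw [Pi.mul_apply, h1, one_mul, hval]
      show _ = ((MonoidHom.mk' f₀ hmulf ⟨grpIota S s, hmem⟩ : Circle) : ℂ)
      rw [MonoidHom.mk'_apply, hspec, hψ1, map_one, mul_one]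
end

section
/- For every subset D of E(Ŝ), the closure in Ŝ of the set ⋃_{ρ ∈ D} ρX equals ⋃_{ρ ∈ cl(D)} ρX, where cl(D) is the closure of D in Ŝ. -/
open Complex Topology Set

lemma aux_charGroup_closed (S : Type*) [CommMonoid S] : IsClosed (charGroup S) := by
  have heq : charGroup S = ({ψ : S → ℂ | ψ 1 = 1} ∩
      ⋂ (s : S), ⋂ (t : S), {ψ : S → ℂ | ψ (s*t) = ψ s * ψ t}) ∩
      ((⋂ s : S, {ψ : S → ℂ | ‖ψ s‖ ≤ 1}) ∩
        ⋂ s : S, {ψ : S → ℂ | ‖ψ s‖ = 1}) := by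
    ext ψ
    simp only [charGroup, Shat, Set.mem_setOf_eq, Set.mem_inter_iff, Set.mem_iInter]
    tauto
  rw [heq]
  have c1 : IsClosed {ψ : S → ℂ | ψ 1 = 1} :=
    isClosed_eq (continuous_apply 1) continuous_const
  have c2 : IsClosed (⋂ (s : S), ⋂ (t : S), {ψ : S → ℂ | ψ (s*t) = ψ s * ψ t}) :=
    isClosed_iInter fun s => isClosed_iInter fun t =>
      isClosed_eq (continuous_apply _) ((continuous_apply s).mul (continuous_apply t))
  have c3 : IsClosed (⋂ s : S, {ψ : S → ℂ | ‖ψ s‖ ≤ 1}) :=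
    isClosed_iInter fun s => isClosed_le
      (continuous_norm.comp (continuous_apply s)) continuous_const
  have c4 : IsClosed (⋂ s : S, {ψ : S → ℂ | ‖ψ s‖ = 1}) :=
    isClosed_iInter fun s => isClosed_eq
      (continuous_norm.comp (continuous_apply s)) continuous_const
  exact (c1.inter c2).inter (c3.inter c4)

lemma aux_ball_compact (S : Type*) :
    IsCompact (Set.pi Set.univ (fun _ : S => Metric.closedBall (0:ℂ) 1)) :=
  isCompact_univ_pi (fun _ => isCompact_closedBall 0 1)

set_option maxHeartbeats 1000000 in
/-- For every subset `D` of `E(Ŝ)`, the closure of `⋃_{ρ ∈ D} ρX`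
equals `⋃_{ρ ∈ cl(D)} ρX`. -/
theorem stmt12 {S : Type*} [CommMonoid S] [IsCancelMul S]
    (D : Set (S → ℂ)) (hD : D ⊆ idemSC S) :
    closure (⋃ ρ ∈ D, cosetX S ρ) = ⋃ ρ ∈ closure D, cosetX S ρ := by
  have hK : IsCompact (Set.pi Set.univ (fun _ : S => Metric.closedBall (0:ℂ) 1)) :=
    aux_ball_compact S
  have hShatK : Shat S ⊆ Set.pi Set.univ fun _ : S => Metric.closedBall (0:ℂ) 1 := by
    intro ψ hψ s _
    simpa [Metric.mem_closedBall, Complex.dist_eq] using hψ.2.2 s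
  have hDc : IsCompact (closure D) := by
    refine hK.of_isClosed_subset isClosed_closure ?_
    refine closure_minimal (fun ψ hψ => hShatK ((hD hψ).1)) hK.isClosed
  have hXclosed : IsClosed (charGroup S) := aux_charGroup_closed S
  have hXc : IsCompact (charGroup S) :=
    hK.of_isClosed_subset hXclosed (fun ψ hψ => hShatK hψ.1)
  have hU : (⋃ ρ ∈ closure D, cosetX S ρ) =
      (fun p : (S → ℂ) × (S → ℂ) => p.1 * p.2) '' (closure D ×ˢ charGroup S) := by
    ext φ
    simp only [Set.mem_iUnion, Set.mem_image, Set.mem_prod, cosetX, Set.mem_setOf_eq]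
    constructor
    · rintro ⟨ρ, hρ, χ, hχ, rfl⟩
      exact ⟨(ρ, χ), ⟨hρ, hχ⟩, rfl⟩
    · rintro ⟨⟨ρ, χ⟩, ⟨hρ, hχ⟩, rfl⟩
      exact ⟨ρ, hρ, χ, hχ, rfl⟩
  have hUc : IsCompact ((fun p : (S → ℂ) × (S → ℂ) => p.1 * p.2) ''
      (closure D ×ˢ charGroup S)) :=
    (hDc.prod hXc).image (continuous_fst.mul continuous_snd)
  apply le_antisymm
  · rw [hU]
    refine closure_minimal ?_ hUc.isClosed
    intro φ hφ
    simp only [Set.mem_iUnion, cosetX, Set.mem_setOf_eq] at hφ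
    obtain ⟨ρ, hρ, χ, hχ, rfl⟩ := hφ
    exact ⟨(ρ, χ), ⟨subset_closure hρ, hχ⟩, rfl⟩
  · intro φ hφ
    simp only [Set.mem_iUnion, cosetX, Set.mem_setOf_eq] at hφ
    obtain ⟨ρ, hρ, χ, hχ, rfl⟩ := hφ
    have hm : Continuous (fun f : S → ℂ => f * χ) := continuous_id.mul continuous_const
    have h1 : ρ * χ ∈ (fun f : S → ℂ => f * χ) '' closure D := ⟨ρ, hρ, rfl⟩
    have h2 : (fun f : S → ℂ => f * χ) '' closure D ⊆
        closure ((fun f : S → ℂ => f * χ) '' D) :=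
      image_closure_subset_closure_image hm
    have h3 : (fun f : S → ℂ => f * χ) '' D ⊆ ⋃ ρ ∈ D, cosetX S ρ := by
      rintro _ ⟨ρ', hρ', rfl⟩
      exact Set.mem_biUnion hρ' ⟨χ, hχ, rfl⟩
    exact closure_mono h3 (h2 h1)
end

section
/- If the semigroup S contains no nontrivial simple ideals, then the strong boundary of A(Ŝ) and the Shilov boundary of A(Ŝ) both coincide with the character group X. -/
open Complex Topology Set

section Hom
variable {S : Type*} [CommMonoid S] [IsCancelMul S]

/-- Goodness predicate for partial-hom graphs. -/
def GoodGraph (s₀ : S) (G : Set (S × ℝ)) : Prop :=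
  ((1 : S), (0 : ℝ)) ∈ G ∧ (s₀, (1 : ℝ)) ∈ G ∧
  (∀ p q : S × ℝ, p ∈ G → q ∈ G → p.1 = q.1 → p.2 = q.2) ∧
  (∀ p q : S × ℝ, p ∈ G → q ∈ G → (p.1 * q.1, p.2 + q.2) ∈ G) ∧
  (∀ p q : S × ℝ, p ∈ G → q ∈ G → (∃ z, p.1 * z = q.1) → p.2 ≤ q.2)

omit [IsCancelMul S] in
theorem GoodGraph.pow_mem {s₀ : S} {G : Set (S × ℝ)} (hG : GoodGraph s₀ G)
    {x : S} {a : ℝ} (hx : (x, a) ∈ G) (n : ℕ) : (x ^ n, (n : ℝ) * a) ∈ G := by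
  induction n with
  | zero => simpa using hG.1
  | succ n ih =>
      have h2 := hG.2.2.2.1 _ _ ih hx
      rw [pow_succ, Nat.cast_succ, add_mul, one_mul]
      exact h2

theorem exists_posHom (hu : ∀ a b : S, a * b = 1 → a = 1)
    (s₀ : S) (hs₀ : s₀ ≠ 1)
    (hA : ∀ x : S, ∃ (n : ℕ) (y : S), x * y = s₀ ^ n) :
    ∃ h : S → ℝ, (∀ x y, h (x * y) = h x + h y) ∧ (∀ x, 0 ≤ h x) ∧ h s₀ = 1 := by
  have hpow : ∀ n : ℕ, 1 ≤ n → s₀ ^ n ≠ 1 := by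
    intro n hn hone
    obtain ⟨m, rfl⟩ : ∃ m, n = m + 1 := ⟨n - 1, (Nat.succ_pred_eq_of_pos hn).symm⟩
    exact hs₀ (hu s₀ (s₀ ^ m) (by rw [← pow_succ']; exact hone))
  have hchain : ∀ c ⊆ {G : Set (S × ℝ) | GoodGraph s₀ G}, IsChain (· ⊆ ·) c → c.Nonempty →
      ∃ ub ∈ {G : Set (S × ℝ) | GoodGraph s₀ G}, ∀ s ∈ c, s ⊆ ub := by
    intro c hcS hchain hcne
    refine ⟨⋃₀ c, ?_, fun s hs => subset_sUnion_of_mem hs⟩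
    obtain ⟨G₁, hG₁⟩ := hcne
    have hg₁ : GoodGraph s₀ G₁ := hcS hG₁
    have pair : ∀ p q : S × ℝ, p ∈ ⋃₀ c → q ∈ ⋃₀ c →
        ∃ G₂ ∈ c, p ∈ G₂ ∧ q ∈ G₂ := by
      rintro p q ⟨Gp, hGp, hp⟩ ⟨Gq, hGq, hq⟩
      rcases hchain.total hGp hGq with hsub | hsub
      · exact ⟨Gq, hGq, hsub hp, hq⟩
      · exact ⟨Gp, hGp, hp, hsub hq⟩
    refine ⟨⟨G₁, hG₁, hg₁.1⟩, ⟨G₁, hG₁, hg₁.2.1⟩, ?_, ?_, ?_⟩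
    · intro p q hp hq heq
      obtain ⟨G₂, hG₂, hp₂, hq₂⟩ := pair p q hp hq
      exact (hcS hG₂).2.2.1 p q hp₂ hq₂ heq
    · intro p q hp hq
      obtain ⟨G₂, hG₂, hp₂, hq₂⟩ := pair p q hp hq
      exact ⟨G₂, hG₂, (hcS hG₂).2.2.2.1 p q hp₂ hq₂⟩
    · intro p q hp hq hdvd
      obtain ⟨G₂, hG₂, hp₂, hq₂⟩ := pair p q hp hq
      exact (hcS hG₂).2.2.2.2 p q hp₂ hq₂ hdvd
  have hbase : (Set.range fun n : ℕ => ((s₀ ^ n : S), (n : ℝ))) ∈ {G : Set (S × ℝ) | GoodGraph s₀ G} := by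
    constructor
    · exact ⟨0, by simp⟩
    refine ⟨⟨1, by simp⟩, ?_, ?_, ?_⟩
    · rintro p q ⟨n, rfl⟩ ⟨m, rfl⟩ heq
      simp only at heq ⊢
      rcases lt_trichotomy n m with hnm | rfl | hmn
      · exfalso
        obtain ⟨i, rfl⟩ : ∃ i, m = n + (i + 1) := ⟨m - n - 1, by omega⟩
        have h4 : s₀ ^ n * 1 = s₀ ^ n * s₀ ^ (i + 1) := by
          rw [mul_one, ← pow_add]; exact heq
        have h1 : (1 : S) = s₀ ^ (i + 1) := mul_left_cancel h4
        exact hpow (i + 1) (Nat.succ_le_succ (Nat.zero_le _)) h1.symm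
      · rfl
      · exfalso
        obtain ⟨i, rfl⟩ : ∃ i, n = m + (i + 1) := ⟨n - m - 1, by omega⟩
        have h4 : s₀ ^ m * 1 = s₀ ^ m * s₀ ^ (i + 1) := by
          rw [mul_one, ← pow_add]; exact heq.symm
        have h1 : (1 : S) = s₀ ^ (i + 1) := mul_left_cancel h4
        exact hpow (i + 1) (Nat.succ_le_succ (Nat.zero_le _)) h1.symm
    · rintro p q ⟨n, rfl⟩ ⟨m, rfl⟩
      exact ⟨n + m, by simp [pow_add]⟩
    · rintro p q ⟨n, rfl⟩ ⟨m, rfl⟩ ⟨z, hz⟩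
      simp only at hz ⊢
      rcases le_or_gt n m with hnm | hmn
      · exact_mod_cast hnm
      · exfalso
        obtain ⟨i, rfl⟩ : ∃ i, n = m + (i + 1) := ⟨n - m - 1, by omega⟩
        have h4 : s₀ ^ m * (s₀ ^ (i + 1) * z) = s₀ ^ m * 1 := by
          rw [mul_one]
          calc s₀ ^ m * (s₀ ^ (i + 1) * z) = s₀ ^ (m + (i + 1)) * z := by
                rw [pow_add s₀ m (i + 1)]; ac_rfl
            _ = s₀ ^ m := hz
        have h1 : s₀ ^ (i + 1) * z = 1 := mul_left_cancel h4
        exact hpow (i + 1) (Nat.succ_le_succ (Nat.zero_le _)) (hu _ _ h1)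
  obtain ⟨G, hG0, hGmax⟩ := zorn_subset_nonempty {G : Set (S × ℝ) | GoodGraph s₀ G} hchain
      (Set.range fun n : ℕ => (s₀ ^ n, (n : ℝ))) hbase
  have hG : GoodGraph s₀ G := hGmax.1
  have htot : ∀ u : S, ∃ a : ℝ, (u, a) ∈ G := by
    intro u
    by_contra hnu
    push_neg at hnu
    set L : Set ℝ := insert 0 {r | ∃ i : ℕ, 1 ≤ i ∧ ∃ x a y b z, ((x, a) : S × ℝ) ∈ G ∧
      (y, b) ∈ G ∧ x * z = u ^ i * y ∧ r = (a - b) / i} with hL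
    set U : Set ℝ := {r | ∃ j : ℕ, 1 ≤ j ∧ ∃ x a y b z, ((x, a) : S × ℝ) ∈ G ∧
      (y, b) ∈ G ∧ u ^ j * x * z = y ∧ r = (b - a) / j} with hU
    have hcompat : ∀ l ∈ L, ∀ r ∈ U, l ≤ r := by
      rintro l hl r ⟨j, hj, x', a', y', b', z', hx', hy', hrel', rfl⟩
      have hj0 : (0 : ℝ) < j := by exact_mod_cast hj
      have hub : a' ≤ b' := by
        have h5 : x' * (u ^ j * z') = y' := by rw [← hrel']; ac_rfl
        exact hG.2.2.2.2 _ _ hx' hy' ⟨u ^ j * z', h5⟩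
      rcases hl with rfl | ⟨i, hi, x, a, y, b, z, hx, hy, hrel, rfl⟩
      · exact div_nonneg (by linarith) hj0.le
      · have hi0 : (0 : ℝ) < i := by exact_mod_cast hi
        have key : (x ^ j * x' ^ i) * (z ^ j * z' ^ i) = y ^ j * y' ^ i := by
          have e1 : x ^ j * z ^ j = u ^ (i * j) * y ^ j := by
            rw [← mul_pow, hrel, mul_pow, ← pow_mul]
          have e2 : u ^ (i * j) * (x' ^ i * z' ^ i) = y' ^ i := by
            have h3 : (u ^ j * x' * z') ^ i = y' ^ i := by rw [hrel']
            rw [← h3, mul_pow, mul_pow, ← pow_mul, mul_comm i j]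
            ac_rfl
          calc (x ^ j * x' ^ i) * (z ^ j * z' ^ i)
              = (x ^ j * z ^ j) * (x' ^ i * z' ^ i) := by ac_rfl
            _ = u ^ (i * j) * y ^ j * (x' ^ i * z' ^ i) := by rw [e1]
            _ = y ^ j * (u ^ (i * j) * (x' ^ i * z' ^ i)) := by ac_rfl
            _ = y ^ j * y' ^ i := by rw [e2]
        have hm1 := hG.2.2.2.1 _ _ (hG.pow_mem hx j) (hG.pow_mem hx' i)
        have hm2 := hG.2.2.2.1 _ _ (hG.pow_mem hy j) (hG.pow_mem hy' i)
        have hmono := hG.2.2.2.2 _ _ hm1 hm2 ⟨z ^ j * z' ^ i, key⟩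
        simp only at hmono
        rw [div_le_div_iff₀ hi0 hj0]
        nlinarith [hmono]
    have hLne : L.Nonempty := ⟨0, Or.inl rfl⟩
    have hUne : U.Nonempty := by
      obtain ⟨n, y, hy⟩ := hA u
      have hsn : ((s₀ ^ n : S), (n : ℝ)) ∈ G := by
        simpa using hG.pow_mem hG.2.1 n
      refine ⟨_, 1, le_rfl, 1, 0, s₀ ^ n, (n : ℝ), y, hG.1, hsn, ?_, rfl⟩
      rw [pow_one, mul_one]
      exact hy
    obtain ⟨r₀, hr₀⟩ := hUne
    have hbdd : BddAbove L := ⟨r₀, fun l hl => hcompat l hl r₀ hr₀⟩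
    set c := sSup L with hc
    have hc0 : 0 ≤ c := le_csSup hbdd (Or.inl rfl)
    have hcL : ∀ l ∈ L, l ≤ c := fun l hl => le_csSup hbdd hl
    have hcU : ∀ r ∈ U, c ≤ r := fun r hr => csSup_le hLne (fun l hl => hcompat l hl r hr)
    set G' : Set (S × ℝ) := {p | ∃ (x : S) (a : ℝ) (k : ℕ), ((x, a) : S × ℝ) ∈ G ∧
      p = (x * u ^ k, a + k * c)} with hG'
    have hsub : G ⊆ G' := by
      rintro ⟨x, a⟩ hx
      exact ⟨x, a, 0, hx, by simp⟩
    have huG' : (u, c) ∈ G' := ⟨1, 0, 1, hG.1, by simp⟩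
    have hval : ∀ (x x' : S) (a a' : ℝ) (k k' : ℕ), (x, a) ∈ G → (x', a') ∈ G →
        k' ≤ k → x * u ^ k = x' * u ^ k' → a + k * c = a' + k' * c := by
      intro x x' a a' k k' hx hx' hkk' heq
      obtain ⟨i, rfl⟩ : ∃ i, k = k' + i := ⟨k - k', (Nat.add_sub_cancel' hkk').symm⟩
      have hxx' : x * u ^ i = x' := by
        have h4 : (x * u ^ i) * u ^ k' = x' * u ^ k' := by
          rw [← heq, pow_add]; ac_rfl
        exact mul_right_cancel h4
      rcases Nat.eq_zero_or_pos i with rfl | hi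
      · have : a = a' := hG.2.2.1 (x, a) (x', a') hx hx' (by simpa using hxx')
        simp [this]
      · have hi' : (1 : ℕ) ≤ i := hi
        have hlow : (a' - a) / i ∈ L := by
          refine Or.inr ⟨i, hi', x', a', x, a, 1, hx', hx, ?_, rfl⟩
          rw [mul_one, ← hxx']; ac_rfl
        have hupp : (a' - a) / i ∈ U := by
          refine ⟨i, hi', x, a, x', a', 1, hx, hx', ?_, rfl⟩
          rw [mul_one, ← hxx']; ac_rfl
        have h1 := hcL _ hlow
        have h2 := hcU _ hupp
        have hi0 : (0 : ℝ) < i := by exact_mod_cast hi'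
        have heqc : (a' - a) / i = c := le_antisymm h1 h2
        rw [div_eq_iff (ne_of_gt hi0)] at heqc
        rw [Nat.cast_add, add_mul]
        linarith
    have hG'good : GoodGraph s₀ G' := by
      refine ⟨hsub hG.1, hsub hG.2.1, ?_, ?_, ?_⟩
      · rintro p q ⟨x, a, k, hx, rfl⟩ ⟨x', a', k', hx', rfl⟩ heq
        simp only at heq ⊢
        rcases le_total k' k with hkk' | hkk'
        · exact hval x x' a a' k k' hx hx' hkk' heq
        · exact (hval x' x a' a k' k hx' hx hkk' heq.symm).symm
      · rintro p q ⟨x, a, k, hx, rfl⟩ ⟨x', a', k', hx', rfl⟩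
        refine ⟨x * x', a + a', k + k', hG.2.2.2.1 _ _ hx hx', ?_⟩
        simp only [Prod.mk.injEq]
        constructor
        · rw [pow_add]; ac_rfl
        · push_cast; ring
      · rintro p q ⟨x, a, j, hx, rfl⟩ ⟨y, b, k, hy, rfl⟩ ⟨z, hz⟩
        simp only at hz ⊢
        rcases le_total j k with hjk | hkj
        · obtain ⟨i, rfl⟩ : ∃ i, k = j + i := ⟨k - j, (Nat.add_sub_cancel' hjk).symm⟩
          have hrel : x * z = u ^ i * y := by
            have h4 : (x * z) * u ^ j = (u ^ i * y) * u ^ j := by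
              calc (x * z) * u ^ j = x * u ^ j * z := by ac_rfl
                _ = y * u ^ (j + i) := hz
                _ = (u ^ i * y) * u ^ j := by rw [pow_add]; ac_rfl
            exact mul_right_cancel h4
          rcases Nat.eq_zero_or_pos i with rfl | hi
          · have hab : a ≤ b := hG.2.2.2.2 _ _ hx hy ⟨z, by simpa using hrel⟩
            push_cast
            linarith
          · have hi' : (1 : ℕ) ≤ i := hi
            have hlow : (a - b) / i ∈ L := Or.inr ⟨i, hi', x, a, y, b, z, hx, hy, hrel, rfl⟩
            have h1 := hcL _ hlow
            have hi0 : (0 : ℝ) < i := by exact_mod_cast hi'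
            rw [div_le_iff₀ hi0] at h1
            rw [Nat.cast_add, add_mul]
            nlinarith [h1]
        · obtain ⟨i, rfl⟩ : ∃ i, j = k + i := ⟨j - k, (Nat.add_sub_cancel' hkj).symm⟩
          have hrel : u ^ i * x * z = y := by
            have h4 : (u ^ i * x * z) * u ^ k = y * u ^ k := by
              calc (u ^ i * x * z) * u ^ k = x * u ^ (k + i) * z := by
                    rw [pow_add]; ac_rfl
                _ = y * u ^ k := hz
            exact mul_right_cancel h4
          rcases Nat.eq_zero_or_pos i with rfl | hi
          · have hab : a ≤ b := by
              refine hG.2.2.2.2 _ _ hx hy ⟨z, ?_⟩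
              rw [← hrel]; simp
            push_cast
            linarith
          · have hi' : (1 : ℕ) ≤ i := hi
            have hupp : (b - a) / i ∈ U := ⟨i, hi', x, a, y, b, z, hx, hy, hrel, rfl⟩
            have h2 := hcU _ hupp
            have hi0 : (0 : ℝ) < i := by exact_mod_cast hi'
            rw [le_div_iff₀ hi0] at h2
            rw [Nat.cast_add, add_mul]
            nlinarith [h2]
    have : G' ⊆ G := hGmax.2 hG'good hsub
    exact hnu c (this huG')
  choose h hh using htot
  refine ⟨h, ?_, ?_, ?_⟩
  · intro x y
    have h1 := hG.2.2.2.1 _ _ (hh x) (hh y)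
    exact hG.2.2.1 _ _ (hh (x * y)) h1 rfl
  · intro x
    have := hG.2.2.2.2 _ _ hG.1 (hh x) ⟨x, one_mul x⟩
    simpa using this
  · exact hG.2.2.1 _ _ (hh s₀) hG.2.1 rfl

end Hom
section Chunk2
variable {S : Type*} [CommMonoid S]

theorem shat_isClosed : IsClosed (Shat S) := by
  have : Shat S = {ψ : S → ℂ | ψ 1 = 1} ∩
      ((⋂ (s : S) (t : S), {ψ : S → ℂ | ψ (s * t) = ψ s * ψ t}) ∩
        ⋂ (s : S), {ψ : S → ℂ | ‖ψ s‖ ≤ 1}) := by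
    ext ψ; simp [Shat, Set.mem_iInter, forall_and]
  rw [this]
  refine IsClosed.inter ?_ (IsClosed.inter ?_ ?_)
  · exact isClosed_eq (continuous_apply 1) continuous_const
  · exact isClosed_iInter fun s => isClosed_iInter fun t =>
      isClosed_eq (continuous_apply _) ((continuous_apply s).mul (continuous_apply t))
  · exact isClosed_iInter fun s =>
      isClosed_le (continuous_norm.comp (continuous_apply s)) continuous_const

theorem shat_isCompact : IsCompact (Shat S) := by
  refine IsCompact.of_isClosed_subset (isCompact_univ_pi
    (fun _ : S => isCompact_closedBall (0 : ℂ) 1)) shat_isClosed ?_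
  intro ψ hψ
  rw [Set.mem_univ_pi]
  intro s
  simpa [Metric.mem_closedBall, Complex.dist_eq] using hψ.2.2 s

theorem charGroup_subset_shat : charGroup S ⊆ Shat S := fun _ h => h.1

theorem charGroup_isClosed : IsClosed (charGroup S) := by
  have : charGroup S = Shat S ∩ ⋂ (s : S), {ψ : S → ℂ | ‖ψ s‖ = 1} := by
    ext ψ; simp [charGroup, Set.mem_iInter]
  rw [this]
  exact shat_isClosed.inter (isClosed_iInter fun s =>
    isClosed_eq (continuous_norm.comp (continuous_apply s)) continuous_const)

theorem charGroup_isCompact : IsCompact (charGroup S) :=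
  IsCompact.of_isClosed_subset shat_isCompact charGroup_isClosed charGroup_subset_shat

theorem one_mem_charGroup : (fun _ : S => (1 : ℂ)) ∈ charGroup S :=
  ⟨⟨rfl, fun _ _ => (one_mul 1).symm, fun _ => by simp⟩, fun _ => by simp⟩

theorem memA_const (c : ℂ) : MemA S (fun _ => c) :=
  ⟨continuousOn_const, fun _ _ _ _ => ⟨differentiableOn_const _, continuousWithinAt_const⟩⟩

theorem MemA.mul {f g : (S → ℂ) → ℂ} (hf : MemA S f) (hg : MemA S g) :
    MemA S (f * g) := by
  refine ⟨hf.1.mul hg.1, fun ρ hρ ψ hψ => ?_⟩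
  exact ⟨((hf.2 ρ hρ ψ hψ).1).mul ((hg.2 ρ hρ ψ hψ).1),
    ((hf.2 ρ hρ ψ hψ).2).mul ((hg.2 ρ hρ ψ hψ).2)⟩

/-- key elementary estimate -/
theorem abs_one_add_div_two_lt_one {w : ℂ} (hw : ‖w‖ ≤ 1) (hne : w ≠ 1) :
    ‖(1 + w) / 2‖ < 1 := by
  have h2 : ‖(1 + w) / 2‖ = ‖1 + w‖ / 2 := by
    rw [norm_div]; norm_num
  rw [h2]
  rw [div_lt_one (by norm_num : (0:ℝ) < 2)]
  have hsq : (‖1 + w‖) ^ 2 = (1 + w.re) ^ 2 + w.im ^ 2 := by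
    rw [Complex.sq_norm, Complex.normSq_apply]
    simp [add_sq]
    ring
  have hsq' : w.re ^ 2 + w.im ^ 2 ≤ 1 := by
    have := Complex.sq_norm w
    rw [Complex.normSq_apply] at this
    nlinarith [hw, norm_nonneg w]
  have hre : w.re < 1 := by
    rcases lt_or_ge w.re 1 with h | h
    · exact h
    · exfalso
      have him : w.im = 0 := by nlinarith
      have : w.re = 1 := by nlinarith
      exact hne (Complex.ext (by simp [this]) (by simp [him]))
  nlinarith [norm_nonneg (1 + w), hsq, hsq']

/-- The basic peak function at character value `χ s`. -/
theorem memA_peak (s : S) (c : ℂ) :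
    MemA S (fun ψ => (1 + c * ψ s) / 2) := by
  constructor
  · exact ((continuous_const.add (continuous_const.mul (continuous_apply s))).div_const
      2).continuousOn
  · intro ρ hρ ψ hψ
    by_cases hρs : ρ s = 0
    · have heq : ∀ z : ℂ, (scPow ρ z * ψ) s = 0 := by
        intro z; simp [scPow, Pi.mul_apply, hρs]
      constructor
      · have : (fun z : ℂ => (1 + c * (scPow ρ z * ψ) s) / 2) =
            fun _ : ℂ => (1 + c * 0) / 2 := funext fun z => by rw [heq]
        rw [this]; exact differentiableOn_const _
      · have : (fun t : ℝ => (1 + c * (scPow ρ (t : ℂ) * ψ) s) / 2) =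
            fun _ : ℝ => (1 + c * 0) / 2 := funext fun t => by rw [heq]
        rw [this]; exact continuousWithinAt_const
    · have heq : ∀ z : ℂ, (scPow ρ z * ψ) s =
          Complex.exp (Complex.log (ρ s) * z) * ψ s := by
        intro z
        simp only [scPow, Pi.mul_apply, if_neg hρs, Complex.cpow_def_of_ne_zero hρs]
      constructor
      · have : (fun z : ℂ => (1 + c * (scPow ρ z * ψ) s) / 2) =
            fun z : ℂ => (1 + c * (Complex.exp (Complex.log (ρ s) * z) * ψ s)) / 2 :=
          funext fun z => by rw [heq]
        rw [this]
        exact (((differentiable_const _).add ((differentiable_const c).mul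
          (((differentiable_id.const_mul _).cexp).mul (differentiable_const _)))).div_const
            2).differentiableOn
      · have : (fun t : ℝ => (1 + c * (scPow ρ (t : ℂ) * ψ) s) / 2) =
            fun t : ℝ => (1 + c * (Complex.exp (Complex.log (ρ s) * (t : ℂ)) * ψ s)) / 2 :=
          funext fun t => by rw [heq]
        rw [this]
        exact (Continuous.continuousWithinAt (by continuity))

/-- Every character is a p-point. -/
theorem char_isPPoint {χ : S → ℂ} (hχ : χ ∈ charGroup S) : IsPPointA S χ := by
  refine ⟨hχ.1, {P | ∃ s : S, P = {ψ ∈ Shat S | ψ s = χ s}}, ?_, ?_⟩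
  · rintro P ⟨s, rfl⟩
    refine ⟨fun ψ hψ => hψ.1, ?_, ?_⟩
    · exact shat_isClosed.inter (isClosed_eq (continuous_apply s) continuous_const)
    · refine ⟨fun ψ => (1 + (starRingEnd ℂ) (χ s) * ψ s) / 2, memA_peak s _, ?_, ?_⟩
      · rintro ψ ⟨hψS, hψs⟩
        show (1 + (starRingEnd ℂ) (χ s) * ψ s) / 2 = 1
        rw [hψs]
        have : (starRingEnd ℂ) (χ s) * χ s = 1 := by
          rw [mul_comm, Complex.mul_conj]
          norm_cast
          rw [← Complex.sq_norm, hχ.2 s]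
          norm_num
        rw [this]; norm_num
      · rintro ψ ⟨hψS, hψs⟩
        have hne : ψ s ≠ χ s := fun h => hψs ⟨hψS, h⟩
        show ‖(1 + (starRingEnd ℂ) (χ s) * ψ s) / 2‖ < 1
        refine abs_one_add_div_two_lt_one ?_ ?_
        · rw [norm_mul]
          calc ‖(starRingEnd ℂ) (χ s)‖ * ‖ψ s‖
              = 1 * ‖ψ s‖ := by rw [Complex.norm_conj, hχ.2 s]
            _ ≤ 1 := by rw [one_mul]; exact hψS.2.2 s
        · intro hone
          apply hne
          have hχs : ‖χ s‖ = 1 := hχ.2 s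
          have h2 : χ s * ((starRingEnd ℂ) (χ s) * ψ s) = χ s * 1 := by rw [hone]
          rw [mul_one, ← mul_assoc, Complex.mul_conj] at h2
          have h1 : (Complex.normSq (χ s) : ℂ) = 1 := by
            norm_cast
            rw [← Complex.sq_norm, hχs]; norm_num
          rw [h1, one_mul] at h2
          exact h2
  · ext ψ
    simp only [Set.mem_sInter, Set.mem_setOf_eq, Set.mem_singleton_iff]
    constructor
    · intro hall
      have h1 : ∀ s : S, ψ s = χ s := fun s => (hall _ ⟨s, rfl⟩).2
      exact funext h1
    · rintro rfl
      rintro P ⟨s, rfl⟩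
      exact ⟨hχ.1, rfl⟩

end Chunk2
section Chunk3
variable {S : Type*} [CommMonoid S]

theorem memA_one : MemA S 1 := memA_const 1

theorem peak_abs_le_one {P : Set (S → ℂ)} {f : (S → ℂ) → ℂ}
    (h1 : ∀ ψ ∈ P, f ψ = 1) (h2 : ∀ ψ ∈ Shat S \ P, ‖f ψ‖ < 1)
    {ψ : S → ℂ} (hψ : ψ ∈ Shat S) : ‖f ψ‖ ≤ 1 := by
  by_cases hP : ψ ∈ P
  · rw [h1 ψ hP]; simp
  · exact (h2 ψ ⟨hψ, hP⟩).le

theorem pPoint_mem_closedBoundary {p : S → ℂ} (hp : IsPPointA S p)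
    {B : Set (S → ℂ)} (hB : IsClosedBoundaryA S B) : p ∈ B := by
  classical
  obtain ⟨hpS, Ps, hPs, hsInter⟩ := hp
  have hpmem : ∀ P ∈ Ps, p ∈ P := by
    intro P hP
    have hpp : p ∈ ⋂₀ Ps := by rw [hsInter]; exact rfl
    exact hpp P hP
  by_contra hpB
  have hBcompact : IsCompact B := IsCompact.of_isClosed_subset shat_isCompact hB.2.1 hB.1
  have hempty : (B ∩ ⋂ P : Ps, (P : Set (S → ℂ))) = ∅ := by
    rw [← Set.sInter_eq_iInter, hsInter]
    exact Set.inter_singleton_eq_empty.mpr hpB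
  obtain ⟨u, hu⟩ := hBcompact.elim_finite_subfamily_closed _
    (fun P : Ps => (hPs P P.2).2.1) hempty
  have hfex : ∀ P : Ps, ∃ f : (S → ℂ) → ℂ, MemA S f ∧ (∀ ψ ∈ (P : Set (S → ℂ)), f ψ = 1) ∧
      ∀ ψ ∈ Shat S \ (P : Set (S → ℂ)), ‖f ψ‖ < 1 := fun P => (hPs P P.2).2.2
  choose f hf using hfex
  set g : (S → ℂ) → ℂ := ∏ P ∈ u, f P with hg
  have hgA : MemA S g :=
    Finset.prod_induction f (MemA S) (fun _ _ ha hb => ha.mul hb) memA_one (fun P _ => (hf P).1)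
  have hgapp : ∀ ψ, g ψ = ∏ P ∈ u, f P ψ := fun ψ => Finset.prod_apply ψ u f
  obtain ⟨b, hbB, hbmax⟩ := hB.2.2 g hgA
  have hbS : b ∈ Shat S := hB.1 hbB
  have hgp : ‖g p‖ = 1 := by
    rw [hgapp]
    have : ∀ P ∈ u, f P p = 1 := fun P _ => (hf P).2.1 p (hpmem P P.2)
    rw [Finset.prod_congr rfl this]
    simp
  have hb1 : 1 ≤ ‖g b‖ := by
    have := hbmax p hpS
    rwa [hgp] at this
  have hbP : ∀ P ∈ u, b ∈ (P : Set (S → ℂ)) := by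
    intro P hPu
    by_contra hbP
    have habs : ‖g b‖ = ∏ P ∈ u, ‖f P b‖ := by
      rw [hgapp]; exact Complex.norm_prod u _
    have hrest : ∏ Q ∈ u.erase P, ‖f Q b‖ ≤ 1 :=
      Finset.prod_le_one (fun Q _ => norm_nonneg _)
        (fun Q _ => peak_abs_le_one (hf Q).2.1 (hf Q).2.2 hbS)
    have hlt : ‖f P b‖ < 1 := (hf P).2.2 b ⟨hbS, hbP⟩
    have : ‖g b‖ < 1 := by
      rw [habs, ← Finset.mul_prod_erase u _ hPu]
      calc ‖f P b‖ * ∏ Q ∈ u.erase P, ‖f Q b‖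
          ≤ ‖f P b‖ * 1 :=
            mul_le_mul_of_nonneg_left hrest (norm_nonneg _)
        _ < 1 := by rw [mul_one]; exact hlt
    linarith
  have : b ∈ B ∩ ⋂ P ∈ u, (P : Set (S → ℂ)) := by
    refine ⟨hbB, ?_⟩
    rw [Set.mem_iInter₂]
    exact hbP
  rw [hu] at this
  exact this

end Chunk3
section Chunk4
variable {S : Type*} [CommMonoid S]

theorem pl_bound {f : (S → ℂ) → ℂ} (hf : MemA S f)
    {ρ χ : S → ℂ} (hρS : ρ ∈ ShatPos S) (hρ0 : ∀ s, ρ s ≠ 0) (hρnX : ρ ∉ charGroup S)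
    (hχ : χ ∈ charGroup S)
    {m M₀ : ℝ} (hm : ∀ φ ∈ charGroup S, ‖f φ‖ ≤ m)
    (hM : ∀ φ ∈ Shat S, ‖f φ‖ ≤ M₀) :
    ∀ z : ℂ, 0 ≤ z.re → ‖f (scPow ρ z * χ)‖ ≤ m := by
  have hr0 : ∀ s, 0 < (ρ s).re := by
    intro s
    rcases lt_or_eq_of_le (hρS.2 s).2 with h | h
    · exact h
    · exact absurd (Complex.ext (by simp [← h]) (by simp [(hρS.2 s).1])) (hρ0 s)
  have hρeq : ∀ s, ρ s = (((ρ s).re : ℝ) : ℂ) := fun s =>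
    Complex.ext (by simp) (by simp [(hρS.2 s).1])
  have hr1 : ∀ s, (ρ s).re ≤ 1 := by
    intro s
    have h1 := hρS.1.2.2 s
    rw [hρeq s, Complex.norm_real, Real.norm_eq_abs, abs_of_pos (hr0 s)] at h1
    exact h1
  set Φ : ℂ → S → ℂ := fun z => scPow ρ z * χ with hΦ
  have hcoord : ∀ (z : ℂ) (s : S), Φ z s = ρ s ^ z * χ s := by
    intro z s
    simp only [hΦ, Pi.mul_apply, scPow, if_neg (hρ0 s)]
  have habs : ∀ (z : ℂ) (s : S), ‖Φ z s‖ = (ρ s).re ^ z.re := by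
    intro z s
    rw [hcoord, norm_mul, hχ.2 s, mul_one]
    conv_lhs => rw [hρeq s]
    exact Complex.norm_cpow_eq_rpow_re_of_pos (hr0 s) z
  have hmul : ∀ (z : ℂ) (s t : S), Φ z (s * t) = Φ z s * Φ z t := by
    intro z s t
    rw [hcoord, hcoord, hcoord, hρS.1.2.1 s t, hχ.1.2.1 s t]
    conv_lhs => rw [hρeq s, hρeq t]
    rw [mul_cpow_ofReal_nonneg (hr0 s).le (hr0 t).le]
    rw [← hρeq s, ← hρeq t]
    ring
  have he : ∀ z : ℂ, Φ z 1 = 1 := by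
    intro z
    rw [hcoord, hρS.1.1, Complex.one_cpow, hχ.1.1, mul_one]
  have hS : ∀ z : ℂ, 0 ≤ z.re → Φ z ∈ Shat S := by
    intro z hz
    refine ⟨he z, hmul z, fun s => ?_⟩
    rw [habs]
    exact Real.rpow_le_one (hr0 s).le (hr1 s) hz
  have hXmem : ∀ y : ℝ, Φ ((y : ℂ) * Complex.I) ∈ charGroup S := by
    intro y
    have hre : ((y : ℂ) * Complex.I).re = 0 := by simp
    refine ⟨hS _ (by rw [hre]), fun s => ?_⟩
    rw [habs, hre, Real.rpow_zero]
  have hcont : Continuous Φ := by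
    refine continuous_pi fun s => ?_
    have : (fun z => Φ z s) = fun z => Complex.exp (Complex.log (ρ s) * z) * χ s := by
      funext z
      rw [hcoord, Complex.cpow_def_of_ne_zero (hρ0 s)]
    rw [this]
    exact ((continuous_const.mul continuous_id).cexp).mul continuous_const
  set G : ℂ → ℂ := fun z => f (Φ z) with hG
  -- existence of a coordinate with modulus < 1
  obtain ⟨s₁, hs₁⟩ : ∃ s₁, (ρ s₁).re < 1 := by
    by_contra hall
    push_neg at hall
    apply hρnX
    refine ⟨hρS.1, fun s => ?_⟩
    have : (ρ s).re = 1 := le_antisymm (hr1 s) (hall s)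
    rw [hρeq s, Complex.norm_real, Real.norm_eq_abs, this]
    norm_num
  have hopen : IsOpen {z : ℂ | 0 < z.re} := isOpen_lt continuous_const Complex.continuous_re
  have hGdiff : DifferentiableOn ℂ G {z : ℂ | 0 < z.re} := by
    intro z₀ hz₀
    have hz₀' : 0 < z₀.re := hz₀
    set ε : ℝ := z₀.re / 2 with hε
    have hε0 : 0 < ε := by positivity
    have hψεS : Φ ((ε : ℝ) : ℂ) ∈ Shat S := hS _ (by simp [hε0.le])
    have hψεnX : Φ ((ε : ℝ) : ℂ) ∉ charGroup S := by
      intro hmem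
      have h1 := hmem.2 s₁
      rw [habs] at h1
      have h2 : (ρ s₁).re ^ ((ε : ℂ)).re < 1 :=
        Real.rpow_lt_one (hr0 s₁).le hs₁ (by simp [hε0])
      rw [h1] at h2
      exact lt_irrefl 1 h2
    have hkey : (fun z : ℂ => f (scPow ρ z * Φ ((ε : ℝ) : ℂ))) =
        fun z : ℂ => f (Φ (z + (ε : ℂ))) := by
      funext z
      congr 1
      funext s
      rw [Pi.mul_apply, hcoord, hcoord, scPow, if_neg (hρ0 s),
        Complex.cpow_add _ _ (hρ0 s)]
      ring
    have h1 : DifferentiableOn ℂ (fun z : ℂ => f (Φ (z + (ε : ℂ)))) {z : ℂ | 0 < z.re} := by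
      rw [← hkey]
      exact (hf.2 ρ ⟨hρS, hρnX⟩ _ ⟨hψεS, hψεnX⟩).1
    have hmem2 : z₀ - (ε : ℂ) ∈ {z : ℂ | 0 < z.re} := by
      simp only [Set.mem_setOf_eq, Complex.sub_re, Complex.ofReal_re]
      rw [hε]
      linarith
    have h2 : DifferentiableAt ℂ (fun z : ℂ => f (Φ (z + (ε : ℂ)))) (z₀ - (ε : ℂ)) :=
      h1.differentiableAt (hopen.mem_nhds hmem2)
    have h3 : DifferentiableAt ℂ G z₀ := by
      have heq : G = (fun z : ℂ => f (Φ (z + (ε : ℂ)))) ∘ (fun z : ℂ => z - (ε : ℂ)) := by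
        funext z
        simp [hG, sub_add_cancel]
      rw [heq]
      exact h2.comp z₀ (differentiableAt_id.sub_const _)
    exact h3.differentiableWithinAt
  have hGcont : ContinuousOn G {z : ℂ | 0 ≤ z.re} := by
    refine ContinuousOn.comp hf.1 hcont.continuousOn ?_
    intro z hz
    exact hS z hz
  have hd : DiffContOnCl ℂ G {z : ℂ | 0 < z.re} := by
    refine ⟨hGdiff, hGcont.mono ?_⟩
    rw [closure_setOf_lt_re]
  have hexp : ∃ c < (2 : ℝ), ∃ B, G =O[Bornology.cobounded ℂ ⊓
      Filter.principal {z : ℂ | 0 < z.re}] fun z => Real.exp (B * ‖z‖ ^ c) := by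
    refine ⟨1, one_lt_two, 0, Asymptotics.IsBigO.of_bound (max M₀ 0) ?_⟩
    rw [Filter.eventually_inf_principal]
    refine Filter.Eventually.of_forall fun z hz => ?_
    simp only [zero_mul, Real.exp_zero, norm_one, mul_one]
    exact le_trans (hM _ (hS z (le_of_lt hz))) (le_max_left _ _)
  have hre : Filter.IsBoundedUnder (· ≤ ·) Filter.atTop fun x : ℝ => ‖G (x : ℂ)‖ := by
    refine ⟨M₀, ?_⟩
    rw [Filter.eventually_map]
    filter_upwards [Filter.eventually_ge_atTop (0 : ℝ)] with x hx
    exact hM _ (hS _ (by simp [hx]))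
  have him : ∀ x : ℝ, ‖G ((x : ℂ) * Complex.I)‖ ≤ m := by
    intro x
    exact hm _ (hXmem x)
  intro z hz
  have := PhragmenLindelof.right_half_plane_of_bounded_on_real hd hexp hre him hz
  exact this

end Chunk4
section Chunk5
variable {S : Type*} [CommMonoid S]

theorem zero_off_one (h : ∀ I : Set S, IsSimpleIdealS S I → I = Set.univ \ {1})
    {ψ : S → ℂ} (hψ : ψ ∈ Shat S) {s₁ : S} (hs₁ : ψ s₁ = 0) :
    ∀ s, s ≠ 1 → ψ s = 0 := by
  have hI : IsSimpleIdealS S {s | ψ s = 0} := by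
    refine ⟨⟨⟨s₁, hs₁⟩, ?_, ?_⟩, ?_⟩
    · intro heq
      have h1 : (1 : S) ∈ {s | ψ s = 0} := heq ▸ Set.mem_univ 1
      rw [Set.mem_setOf_eq, hψ.1] at h1
      exact one_ne_zero h1
    · intro s a ha
      show ψ (s * a) = 0
      rw [hψ.2.1 s a, ha, mul_zero]
    · intro a b ha hb hab
      rw [Set.mem_setOf_eq, hψ.2.1 a b] at hab
      rcases mul_eq_zero.1 hab with h' | h'
      · exact ha h'
      · exact hb h'
  intro s hs
  have : s ∈ {s | ψ s = 0} := by
    rw [h _ hI]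
    exact ⟨Set.mem_univ s, hs⟩
  exact this

theorem abs_lt_one_off_one (h : ∀ I : Set S, IsSimpleIdealS S I → I = Set.univ \ {1})
    {ψ : S → ℂ} (hψ : ψ ∈ Shat S) {s₁ : S} (hs₁ : ‖ψ s₁‖ < 1) :
    ∀ s, s ≠ 1 → ‖ψ s‖ < 1 := by
  have hI : IsSimpleIdealS S {s | ‖ψ s‖ < 1} := by
    refine ⟨⟨⟨s₁, hs₁⟩, ?_, ?_⟩, ?_⟩
    · intro heq
      have h1 : (1 : S) ∈ {s | ‖ψ s‖ < 1} := heq ▸ Set.mem_univ 1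
      rw [Set.mem_setOf_eq, hψ.1] at h1
      simp at h1
    · intro s a ha
      show ‖ψ (s * a)‖ < 1
      rw [hψ.2.1 s a, norm_mul]
      calc ‖ψ s‖ * ‖ψ a‖ ≤ 1 * ‖ψ a‖ :=
            mul_le_mul_of_nonneg_right (hψ.2.2 s) (norm_nonneg _)
        _ < 1 := by rw [one_mul]; exact ha
    · intro a b ha hb hab
      rw [Set.mem_setOf_eq, hψ.2.1 a b, norm_mul] at hab
      have ha' : ‖ψ a‖ = 1 := le_antisymm (hψ.2.2 a) (not_lt.1 ha)
      have hb' : ‖ψ b‖ = 1 := le_antisymm (hψ.2.2 b) (not_lt.1 hb)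
      rw [ha', hb', one_mul] at hab
      exact lt_irrefl 1 hab
  intro s hs
  have : s ∈ {s | ‖ψ s‖ < 1} := by
    rw [h _ hI]
    exact ⟨Set.mem_univ s, hs⟩
  exact this

theorem archimedean_of_noSimple (h : ∀ I : Set S, IsSimpleIdealS S I → I = Set.univ \ {1})
    {s₀ : S} (hs₀ : s₀ ≠ 1) :
    ∀ x : S, ∃ (n : ℕ) (y : S), x * y = s₀ ^ n := by
  set F : Set S := {x | ∃ (n : ℕ) (y : S), x * y = s₀ ^ n} with hF
  by_contra hnot
  push_neg at hnot
  obtain ⟨x₀, hx₀⟩ := hnot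
  have hx₀' : x₀ ∈ Fᶜ := by
    intro hx
    obtain ⟨n, y, hy⟩ := hx
    exact hx₀ n y hy
  have h1F : (1 : S) ∈ F := ⟨0, 1, by simp⟩
  have hs₀F : s₀ ∈ F := ⟨1, 1, by simp⟩
  have hI : IsSimpleIdealS S Fᶜ := by
    refine ⟨⟨⟨x₀, hx₀'⟩, ?_, ?_⟩, ?_⟩
    · intro heq
      have : (1 : S) ∈ Fᶜ := heq ▸ Set.mem_univ 1
      exact this h1F
    · intro s a ha hsa
      apply ha
      obtain ⟨n, y, hy⟩ := hsa
      exact ⟨n, s * y, by rw [← hy]; ac_rfl⟩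
    · intro a b ha hb hab
      apply hab
      have ha' : a ∈ F := not_not.1 ha
      have hb' : b ∈ F := not_not.1 hb
      obtain ⟨n, y, hy⟩ := ha'
      obtain ⟨n', y', hy'⟩ := hb'
      refine ⟨n + n', y * y', ?_⟩
      rw [pow_add, ← hy, ← hy']
      ac_rfl
  have := h _ hI
  have hs₀c : s₀ ∈ Fᶜ := by
    rw [this]
    exact ⟨Set.mem_univ s₀, hs₀⟩
  exact hs₀c hs₀F

theorem scPow_mem_shat {ρ χ : S → ℂ} (hρS : ρ ∈ ShatPos S) (hρ0 : ∀ s, ρ s ≠ 0)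
    (hχ : χ ∈ charGroup S) {z : ℂ} (hz : 0 ≤ z.re) : scPow ρ z * χ ∈ Shat S := by
  have hr0 : ∀ s, 0 < (ρ s).re := by
    intro s
    rcases lt_or_eq_of_le (hρS.2 s).2 with h | h
    · exact h
    · exact absurd (Complex.ext (by simp [← h]) (by simp [(hρS.2 s).1])) (hρ0 s)
  have hρeq : ∀ s, ρ s = (((ρ s).re : ℝ) : ℂ) := fun s =>
    Complex.ext (by simp) (by simp [(hρS.2 s).1])
  have hr1 : ∀ s, (ρ s).re ≤ 1 := by
    intro s
    have h1 := hρS.1.2.2 s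
    rw [hρeq s, Complex.norm_real, Real.norm_eq_abs, abs_of_pos (hr0 s)] at h1
    exact h1
  have hcoord : ∀ s : S, (scPow ρ z * χ) s = ρ s ^ z * χ s := by
    intro s
    simp only [Pi.mul_apply, scPow, if_neg (hρ0 s)]
  refine ⟨?_, ?_, ?_⟩
  · rw [hcoord, hρS.1.1, Complex.one_cpow, hχ.1.1, mul_one]
  · intro s t
    rw [hcoord, hcoord, hcoord, hρS.1.2.1 s t, hχ.1.2.1 s t]
    conv_lhs => rw [hρeq s, hρeq t]
    rw [mul_cpow_ofReal_nonneg (hr0 s).le (hr0 t).le]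
    rw [← hρeq s, ← hρeq t]
    ring
  · intro s
    rw [hcoord, norm_mul, hχ.2 s, mul_one]
    conv_lhs => rw [hρeq s]
    rw [Complex.norm_cpow_eq_rpow_re_of_pos (hr0 s) z]
    exact Real.rpow_le_one (hr0 s).le (hr1 s) hz

theorem charGroup_isClosedBoundary [IsCancelMul S]
    (h : ∀ I : Set S, IsSimpleIdealS S I → I = Set.univ \ {1}) :
    IsClosedBoundaryA S (charGroup S) := by
  refine ⟨charGroup_subset_shat, charGroup_isClosed, ?_⟩
  intro f hf
  obtain ⟨χ₀, hχ₀X, hχ₀max⟩ := charGroup_isCompact.exists_isMaxOn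
    ⟨fun _ => (1 : ℂ), one_mem_charGroup⟩
    (continuous_norm.comp_continuousOn (hf.1.mono charGroup_subset_shat))
  obtain ⟨ψ₀, hψ₀S, hψ₀max⟩ := shat_isCompact.exists_isMaxOn
    ⟨fun _ => (1 : ℂ), charGroup_subset_shat one_mem_charGroup⟩
    (continuous_norm.comp_continuousOn hf.1)
  have hm : ∀ φ ∈ charGroup S, ‖f φ‖ ≤ ‖f χ₀‖ :=
    fun φ hφ => hχ₀max hφ
  have hM : ∀ φ ∈ Shat S, ‖f φ‖ ≤ ‖f ψ₀‖ :=
    fun φ hφ => hψ₀max hφ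
  refine ⟨χ₀, hχ₀X, ?_⟩
  intro ψ hψ
  by_cases hX : ψ ∈ charGroup S
  · exact hm ψ hX
  by_cases hzero : ∀ s, ψ s ≠ 0
  · -- Case A : ψ nowhere zero
    set ρ : S → ℂ := fun s => ((‖ψ s‖ : ℝ) : ℂ) with hρdef
    set χ : S → ℂ := fun s => ψ s / ρ s with hχdef
    have hρ0 : ∀ s, ρ s ≠ 0 := by
      intro s
      simp only [hρdef, ne_eq, Complex.ofReal_eq_zero, norm_eq_zero]
      exact hzero s
    have hρabs : ∀ s, ‖ρ s‖ = ‖ψ s‖ := by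
      intro s
      simp only [hρdef, Complex.norm_real, Real.norm_eq_abs, _root_.abs_of_nonneg (norm_nonneg _)]
    have hρShat : ρ ∈ Shat S := by
      refine ⟨?_, ?_, ?_⟩
      · simp [hρdef, hψ.1]
      · intro s t
        simp only [hρdef, hψ.2.1 s t, norm_mul, Complex.ofReal_mul]
      · intro s
        rw [hρabs]
        exact hψ.2.2 s
    have hρS : ρ ∈ ShatPos S := by
      refine ⟨hρShat, fun s => ⟨by simp [hρdef], by simp [hρdef]⟩⟩
    have hχX : χ ∈ charGroup S := by
      refine ⟨⟨?_, ?_, ?_⟩, ?_⟩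
      · simp [hχdef, hψ.1, hρdef]
      · intro s t
        simp only [hχdef, hψ.2.1 s t, hρShat.2.1 s t]
        rw [mul_div_mul_comm]
      · intro s
        rw [hχdef]
        simp only [norm_div, hρabs]
        rw [div_self (by simp [norm_eq_zero]; exact hzero s)]
      · intro s
        rw [hχdef]
        simp only [norm_div, hρabs]
        rw [div_self (by simp [norm_eq_zero]; exact hzero s)]
    have hρnX : ρ ∉ charGroup S := by
      intro hmem
      apply hX
      refine ⟨hψ, fun s => ?_⟩
      have := hmem.2 s
      rwa [hρabs] at this
    have hψeq : scPow ρ 1 * χ = ψ := by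
      funext s
      simp only [Pi.mul_apply, scPow, if_neg (hρ0 s), Complex.cpow_one, hχdef]
      rw [mul_comm, div_mul_cancel₀ _ (hρ0 s)]
    have := pl_bound hf hρS hρ0 hρnX hχX hm hM 1 (by norm_num)
    rwa [hψeq] at this
  · -- Case B : ψ vanishes somewhere
    push_neg at hzero
    obtain ⟨s', hs'⟩ := hzero
    have hs'1 : s' ≠ 1 := by
      intro he
      rw [he, hψ.1] at hs'
      exact one_ne_zero hs'
    have hzoff : ∀ s, s ≠ 1 → ψ s = 0 := zero_off_one h hψ hs'
    have hu : ∀ a b : S, a * b = 1 → a = 1 := by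
      intro a b hab
      by_contra ha
      have h1 : ψ (a * b) = 0 := by
        rw [hψ.2.1 a b, hzoff a ha, zero_mul]
      rw [hab, hψ.1] at h1
      exact one_ne_zero h1
    obtain ⟨hfun, hadd, hpos, hone⟩ :=
      exists_posHom hu s' hs'1 (archimedean_of_noSimple h hs'1)
    have hfun1 : hfun 1 = 0 := by
      have := hadd 1 1
      rw [mul_one] at this
      linarith
    set ρ : S → ℂ := fun s => ((Real.exp (-hfun s) : ℝ) : ℂ) with hρdef
    have hρ0 : ∀ s, ρ s ≠ 0 := by
      intro s
      simp only [hρdef, ne_eq, Complex.ofReal_eq_zero]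
      exact (Real.exp_pos _).ne'
    have hρabs : ∀ s, ‖ρ s‖ = Real.exp (-hfun s) := by
      intro s
      simp only [hρdef, Complex.norm_real, Real.norm_eq_abs, abs_of_pos (Real.exp_pos _)]
    have hρShat : ρ ∈ Shat S := by
      refine ⟨?_, ?_, ?_⟩
      · simp [hρdef, hfun1]
      · intro s t
        simp only [hρdef, hadd s t, neg_add, Real.exp_add, Complex.ofReal_mul]
      · intro s
        rw [hρabs]
        exact Real.exp_le_one_iff.2 (by linarith [hpos s])
    have hρS : ρ ∈ ShatPos S := ⟨hρShat, fun s => ⟨by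
      simp only [hρdef, Complex.ofReal_im], by
      simp only [hρdef, Complex.ofReal_re]; exact (Real.exp_pos _).le⟩⟩
    have hρs' : ‖ρ s'‖ < 1 := by
      rw [hρabs, hone]
      exact Real.exp_lt_one_iff.2 (by norm_num)
    have hρnX : ρ ∉ charGroup S := by
      intro hmem
      have := hmem.2 s'
      rw [this] at hρs'
      exact lt_irrefl 1 hρs'
    have hρlt : ∀ s, s ≠ 1 → (ρ s).re < 1 := by
      intro s hs
      have := abs_lt_one_off_one h hρShat hρs' s hs
      rwa [hρabs] at this
      -- (ρ s).re = exp (-hfun s)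
    have hPL := pl_bound hf hρS hρ0 hρnX one_mem_charGroup hm hM
    -- the curve
    set Φt : ℝ → S → ℂ := fun t => scPow ρ (t : ℂ) * (fun _ => (1 : ℂ)) with hΦt
    have hcoordt : ∀ (t : ℝ) (s : S), Φt t s = ρ s ^ (t : ℂ) := by
      intro t s
      simp only [hΦt, Pi.mul_apply, scPow, if_neg (hρ0 s), mul_one]
    have htend : Filter.Tendsto Φt Filter.atTop (nhds ψ) := by
      rw [tendsto_pi_nhds]
      intro s
      by_cases hs : s = 1
      · subst hs
        have heq : (fun t : ℝ => Φt t 1) = fun _ : ℝ => (1 : ℂ) := by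
          funext t
          rw [hcoordt, hρShat.1, Complex.one_cpow]
        rw [heq, hψ.1]
        exact tendsto_const_nhds
      · rw [hzoff s hs]
        rw [tendsto_zero_iff_norm_tendsto_zero]
        set c : ℝ := Real.exp (-hfun s) with hcdef
        have hc0 : 0 < c := Real.exp_pos _
        have hc1 : c < 1 := by
          have := hρlt s hs
          simpa only [hρdef, Complex.ofReal_re] using this
        have hnorm : (fun t : ℝ => ‖Φt t s‖) = fun t : ℝ => c ^ t := by
          funext t
          rw [hcoordt]
          have : ρ s = ((c : ℝ) : ℂ) := by simp [hρdef, hcdef]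
          rw [this, Complex.norm_cpow_eq_rpow_re_of_pos hc0, Complex.ofReal_re]
        rw [hnorm]
        have hlog : Real.log c < 0 := Real.log_neg hc0 hc1
        have hexp : (fun t : ℝ => c ^ t) = fun t : ℝ => Real.exp (Real.log c * t) := by
          funext t
          rw [Real.rpow_def_of_pos hc0]
        rw [hexp]
        exact Real.tendsto_exp_atBot.comp (tendsto_const_nhds.neg_mul_atTop hlog Filter.tendsto_id)
    have hmemS : ∀ t : ℝ, 0 ≤ t → Φt t ∈ Shat S := by
      intro t ht
      exact scPow_mem_shat hρS hρ0 one_mem_charGroup (by simp [ht])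
    have hft : Filter.Tendsto (fun t : ℝ => f (Φt t)) Filter.atTop (nhds (f ψ)) := by
      refine ((hf.1 ψ hψ).tendsto).comp ?_
      rw [tendsto_nhdsWithin_iff]
      refine ⟨htend, ?_⟩
      filter_upwards [Filter.eventually_ge_atTop (0 : ℝ)] with t ht
      exact hmemS t ht
    have habs_t : Filter.Tendsto (fun t : ℝ => ‖f (Φt t)‖) Filter.atTop
        (nhds (‖f ψ‖)) := (continuous_norm.tendsto _).comp hft
    refine le_of_tendsto habs_t ?_
    filter_upwards [Filter.eventually_ge_atTop (0 : ℝ)] with t ht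
    exact hPL (t : ℂ) (by simp [ht])

end Chunk5
/-- If `S` contains no nontrivial simple ideals (every simple ideal
equals `S ∖ {e}`), then the strong boundary and the Shilov boundary of `A(Ŝ)` both
coincide with the character group `X`. -/
theorem stmt15 {S : Type*} [CommMonoid S] [IsCancelMul S]
    (h : ∀ I : Set S, IsSimpleIdealS S I → I = Set.univ \ {1}) :
    strongBoundary S = charGroup S ∧ shilovA S = charGroup S := by
  have hXB : IsClosedBoundaryA S (charGroup S) := charGroup_isClosedBoundary h
  constructor
  · apply Set.Subset.antisymm
    · intro p hp
      exact pPoint_mem_closedBoundary hp hXB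
    · intro χ hχ
      exact char_isPPoint hχ
  · apply Set.Subset.antisymm
    · exact Set.sInter_subset_of_mem hXB
    · intro χ hχ
      rw [shilovA, Set.mem_sInter]
      intro B hB
      exact pPoint_mem_closedBoundary (char_isPPoint hχ) hB
end
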